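/- Let H = ℕ = {1, 2, 3, …} with H_L = {1, …, L}, let D_{ij} = −2δ_{ij} + δ_{i,j−1} + δ_{i,j+1} (so that (D^{-1})_{ij} = −min(i,j)), and let G = O be the zero matrix. Then the unique canonical solution of the infinite Q-system ∏_{j∈H} Q_j(w)^{D_{ij}} + w_i = 1, i.e. Q_{i−1}(w)Q_{i+1}(w)/(Q_i(w))^2 + w_i = 1 with Q_0(w) = 1, is given by Q_i(w) = ∏_{j=1}^∞ (1 − w_j)^{−min(i,j)}. -/

import Mathlib

noncomputable def binomC (a : ℂ) (b : ℕ) : ℂ :=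
  (∏ j ∈ Finset.range b, (a - (j : ℂ))) / (Nat.factorial b : ℂ)

noncomputable def cpow {σ : Type*} (f : MvPowerSeries σ ℂ) (α : ℂ) : MvPowerSeries σ ℂ :=
  fun N => ∑ k ∈ Finset.range (N.sum (fun _ e => e) + 1),
    binomC α k * MvPowerSeries.coeff (R := ℂ) N ((f - 1) ^ k)

/-- `HasProdPS f P`: the (possibly infinite) product of the family `f` converges to `P`
in the projective-limit topology on formal power series, i.e. every coefficient of the
finite partial products eventually stabilizes at the corresponding coefficient of `P`,
irrespective of the order of the product. -/
def HasProdPS {ι σ : Type*} (f : ι → MvPowerSeries σ ℂ) (P : MvPowerSeries σ ℂ) : Prop :=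
  ∀ N : σ →₀ ℕ, ∃ s : Finset ι, ∀ t : Finset ι, s ⊆ t →
    MvPowerSeries.coeff (R := ℂ) N (∏ j ∈ t, f j) = MvPowerSeries.coeff (R := ℂ) N P

/-- A family `(Q_i)` with unit constant terms is a solution of the standard infinite
`Q`-system `Q_i + w_i ∏_j Q_j^{G_{ij}} = 1` (the infinite products being required to
converge). -/
def InfStdSys {H : Type*} (G : H → H → ℂ) (Q : H → MvPowerSeries H ℂ) : Prop :=
  (∀ i, MvPowerSeries.constantCoeff (R := ℂ) (Q i) = 1) ∧
  ∀ i, ∃ P, HasProdPS (fun j => cpow (Q j) (G i j)) P ∧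
    Q i + MvPowerSeries.X i * P = 1

/-- A family `(Q_i)` with unit constant terms is a solution of the infinite `Q`-system
`∏_j Q_j^{D_{ij}} + w_i ∏_j Q_j^{G_{ij}} = 1` (the infinite products being required to
converge). -/
def InfSys {H : Type*} (D G : H → H → ℂ) (Q : H → MvPowerSeries H ℂ) : Prop :=
  (∀ i, MvPowerSeries.constantCoeff (R := ℂ) (Q i) = 1) ∧
  ∀ i, ∃ P₁ P₂, HasProdPS (fun j => cpow (Q j) (D i j)) P₁ ∧
    HasProdPS (fun j => cpow (Q j) (G i j)) P₂ ∧
    P₁ + MvPowerSeries.X i * P₂ = 1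

/-- The inversion property of a solution: for each `i`, the iterated infinite product
`∏_j (∏_k Q_k^{(D⁻¹)_{ij} D_{jk}})` exists and equals `Q_i`. -/
def IsCanonicalPS {ι σ : Type*} (Dinv D : ι → ι → ℂ) (Q : ι → MvPowerSeries σ ℂ) : Prop :=
  ∀ i, ∃ inner : ι → MvPowerSeries σ ℂ,
    (∀ j, HasProdPS (fun k => cpow (Q k) (Dinv i j * D j k)) (inner j)) ∧
    HasProdPS inner (Q i)

/-- Condition (D): `Dinv` is a two-sided inverse of the infinite matrix `D`, all the sums
involved having finitely many nonzero terms. -/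
def InvPair {H : Type*} [DecidableEq H] (D Dinv : H → H → ℂ) : Prop :=
  (∀ i k, ({j | D i j * Dinv j k ≠ 0} : Set H).Finite ∧
    ∑ᶠ j, D i j * Dinv j k = if i = k then (1 : ℂ) else 0) ∧
  (∀ i k, ({j | Dinv i j * D j k ≠ 0} : Set H).Finite ∧
    ∑ᶠ j, Dinv i j * D j k = if i = k then (1 : ℂ) else 0)

/-- Condition (G'): the matrix product `G' = G · Dinv` is well-defined, i.e. for each
`i, k` all but finitely many `G_{ij} (D⁻¹)_{jk}` vanish, and its value is `G'`. -/
def MulDef {H : Type*} (G Dinv G' : H → H → ℂ) : Prop :=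
  ∀ i k, ({j | G i j * Dinv j k ≠ 0} : Set H).Finite ∧
    ∑ᶠ j, G i j * Dinv j k = G' i k

/-- The projection `p_L : ℂ[[w]] → ℂ[[w_L]]` (realized as a self-map of `ℂ[[w]]`),
sending `w_i ↦ w_i` for `i ∈ s` and `w_i ↦ 0` otherwise. -/
noncomputable def projL {H : Type*} [DecidableEq H] (s : Finset H)
    (f : MvPowerSeries H ℂ) : MvPowerSeries H ℂ :=
  fun N => if N.support ⊆ s then MvPowerSeries.coeff (R := ℂ) N f else 0

/-- The matrix `D_{ij} = -2δ_{ij} + δ_{i,j-1} + δ_{i,j+1}` on `H = {1,2,3,…}`. -/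
noncomputable def Dtri : ℕ+ → ℕ+ → ℂ := fun i j =>
  if i = j then -2 else if i = j + 1 ∨ j = i + 1 then 1 else 0

/-- Its inverse `(D⁻¹)_{ij} = -min(i,j)`. -/
noncomputable def DtriInv : ℕ+ → ℕ+ → ℂ := fun i j => -(((min i j : ℕ+) : ℕ) : ℂ)

open MvPowerSeries Finset

namespace S12

abbrev PS := MvPowerSeries ℕ+ ℂ

noncomputable def deg (N : ℕ+ →₀ ℕ) : ℕ := N.sum fun _ e => e

lemma deg_zero : deg 0 = 0 := by simp [deg]

lemma deg_add (A B : ℕ+ →₀ ℕ) : deg (A + B) = deg A + deg B := by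
  classical
  simp [deg, Finsupp.sum_add_index]

lemma deg_eq_zero {N : ℕ+ →₀ ℕ} (h : deg N = 0) : N = 0 := by
  classical
  ext x
  simp only [Finsupp.coe_zero, Pi.zero_apply]
  by_contra hx
  have hxs : x ∈ N.support := Finsupp.mem_support_iff.mpr (by simpa using hx)
  have : N x ≤ deg N := Finset.single_le_sum (f := fun i => N i) (fun _ _ => Nat.zero_le _) hxs
  omega

lemma coeff_cpow (f : PS) (α : ℂ) (N : ℕ+ →₀ ℕ) :
    MvPowerSeries.coeff (R := ℂ) N (cpow f α)
      = ∑ k ∈ Finset.range (deg N + 1), binomC α k * MvPowerSeries.coeff (R := ℂ) N ((f - 1) ^ k) := rfl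

lemma prod_range_cast_sub (n k : ℕ) :
    (∏ j ∈ Finset.range k, ((n : ℂ) - (j : ℂ))) = (n.descFactorial k : ℂ) := by
  induction k with
  | zero => simp
  | succ k ih =>
    rw [Finset.prod_range_succ, ih, Nat.descFactorial_succ]
    rcases le_or_gt (k + 1) n with h | h
    · have hk : k ≤ n := by omega
      push_cast [Nat.cast_sub hk]
      ring
    · rcases Nat.lt_or_ge n k with h2 | h2
      · rw [Nat.descFactorial_of_lt h2]
        simp
      · have : n = k := by omega
        subst this
        simp

lemma binomC_nat (n k : ℕ) : binomC (n : ℂ) k = (n.choose k : ℂ) := by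
  rw [binomC, prod_range_cast_sub, Nat.descFactorial_eq_factorial_mul_choose]
  push_cast
  rw [mul_comm, mul_div_assoc, div_self (by exact_mod_cast Nat.factorial_ne_zero k), mul_one]

lemma binomC_zero_right (a : ℂ) : binomC a 0 = 1 := by simp [binomC]

lemma binomC_zero_left {k : ℕ} (hk : k ≠ 0) : binomC 0 k = 0 := by
  rw [binomC, Finset.prod_eq_zero (Finset.mem_range.mpr (Nat.pos_of_ne_zero hk)) (by simp)]
  simp

lemma coeff_pow_eq_zero {g : PS} (hg : MvPowerSeries.constantCoeff (σ := ℕ+) (R := ℂ) g = 0) :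
    ∀ (k : ℕ) (N : ℕ+ →₀ ℕ), deg N < k → MvPowerSeries.coeff (R := ℂ) N (g ^ k) = 0 := by
  intro k
  induction k with
  | zero => intro N h; omega
  | succ k ih =>
    intro N h
    rw [pow_succ, mul_comm, MvPowerSeries.coeff_mul]
    apply Finset.sum_eq_zero
    rintro ⟨A, B⟩ hAB
    rw [Finset.HasAntidiagonal.mem_antidiagonal] at hAB
    by_cases hA : A = 0
    · subst hA
      rw [MvPowerSeries.coeff_zero_eq_constantCoeff] at *
      simp [hg]
    · have h1 : 1 ≤ deg A := by
        rcases Nat.eq_zero_or_pos (deg A) with h0 | h0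
        · exact absurd (deg_eq_zero h0) hA
        · exact h0
      have : deg B < k := by
        have := deg_add A B
        rw [hAB] at this
        omega
      rw [ih B this, mul_zero]

lemma cpow_natCast {f : PS} (hf : MvPowerSeries.constantCoeff (σ := ℕ+) (R := ℂ) f = 1) (n : ℕ) :
    cpow f (n : ℂ) = f ^ n := by
  have hf0 : MvPowerSeries.constantCoeff (σ := ℕ+) (R := ℂ) (f - 1) = 0 := by simp [hf]
  ext N
  rw [coeff_cpow]
  have hfn : f ^ n = ∑ k ∈ Finset.range (n + 1), (f - 1) ^ k * ((n.choose k : ℕ) : PS) := by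
    have := add_pow (f - 1) (1 : PS) n
    rw [sub_add_cancel] at this
    simpa using this
  rw [hfn, map_sum]
  have key : ∀ k, binomC (n : ℂ) k * MvPowerSeries.coeff (R := ℂ) N ((f - 1) ^ k)
      = MvPowerSeries.coeff (R := ℂ) N ((f - 1) ^ k * ((n.choose k : ℕ) : PS)) := by
    intro k
    have hC : ((n.choose k : ℕ) : PS) = MvPowerSeries.C (σ := ℕ+) (R := ℂ) ((n.choose k : ℕ) : ℂ) := by
      rw [map_natCast (MvPowerSeries.C (σ := ℕ+) (R := ℂ)) (n.choose k)]
    rw [hC, MvPowerSeries.coeff_mul_C, binomC_nat, mul_comm]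
  -- now compare the two sums with different ranges
  rcases le_total (deg N) n with h | h
  · rw [Finset.sum_congr rfl (fun k _ => key k)]
    apply Finset.sum_subset
    · intro k hk
      simp only [Finset.mem_range] at *
      omega
    · intro k _ hk
      simp only [Finset.mem_range, not_lt] at hk
      rw [← key k, coeff_pow_eq_zero hf0 k N (by omega), mul_zero]
  · rw [Finset.sum_congr rfl (fun k _ => key k)]
    symm
    apply Finset.sum_subset
    · intro k hk
      simp only [Finset.mem_range] at *
      omega
    · intro k _ hk
      simp only [Finset.mem_range, not_lt] at hk
      have : n.choose k = 0 := Nat.choose_eq_zero_of_lt (by omega)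
      rw [this]
      simp

end S12

section Chunk2
namespace S12
open Polynomial

lemma polyext {p q : Polynomial ℂ} (h : ∀ n : ℕ, p.eval (n : ℂ) = q.eval (n : ℂ)) :
    ∀ z : ℂ, p.eval z = q.eval z := by
  intro z
  have := Polynomial.eq_of_infinite_eval_eq p q ?_
  · rw [this]
  · apply Set.infinite_of_injective_forall_mem (f := fun n : ℕ => (n : ℂ))
    · intro a b hab
      simpa using hab
    · exact fun n => h n

noncomputable def binomPoly (k : ℕ) : Polynomial ℂ :=
  Polynomial.C ((k.factorial : ℂ)⁻¹) * ∏ j ∈ Finset.range k, (Polynomial.X - Polynomial.C (j : ℂ))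

lemma binomPoly_eval (a : ℂ) (k : ℕ) : (binomPoly k).eval a = binomC a k := by
  simp [binomPoly, binomC, Polynomial.eval_prod, div_eq_inv_mul, mul_comm]

noncomputable def cpowPoly (f : PS) (N : ℕ+ →₀ ℕ) : Polynomial ℂ :=
  ∑ k ∈ Finset.range (deg N + 1),
    Polynomial.C (MvPowerSeries.coeff (R := ℂ) N ((f - 1) ^ k)) * binomPoly k

lemma cpowPoly_eval (f : PS) (N : ℕ+ →₀ ℕ) (a : ℂ) :
    (cpowPoly f N).eval a = MvPowerSeries.coeff (R := ℂ) N (cpow f a) := by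
  rw [coeff_cpow, cpowPoly, Polynomial.eval_finset_sum]
  exact Finset.sum_congr rfl fun k _ => by rw [Polynomial.eval_mul, Polynomial.eval_C,
    binomPoly_eval, mul_comm]

lemma cpow_constantCoeff (f : PS) (a : ℂ) : MvPowerSeries.constantCoeff (σ := ℕ+) (R := ℂ) (cpow f a) = 1 := by
  rw [← MvPowerSeries.coeff_zero_eq_constantCoeff, coeff_cpow]
  rw [show deg (0 : ℕ+ →₀ ℕ) = 0 from deg_zero]
  simp [binomC_zero_right]

lemma cpow_zero (f : PS) : cpow f 0 = 1 := by
  ext N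
  rw [coeff_cpow]
  rw [Finset.sum_eq_single 0]
  · simp [binomC_zero_right]
  · intro k _ hk
    rw [binomC_zero_left hk, zero_mul]
  · intro h
    simp at h

lemma cpow_one {f : PS} (hf : MvPowerSeries.constantCoeff (σ := ℕ+) (R := ℂ) f = 1) : cpow f 1 = f := by
  have := cpow_natCast hf 1
  simpa using this

-- cpow f a * f^n = cpow f (a + n)
lemma cpow_mul_pow {f : PS} (hf : MvPowerSeries.constantCoeff (σ := ℕ+) (R := ℂ) f = 1) (n : ℕ) (a : ℂ) :
    cpow f a * f ^ n = cpow f (a + n) := by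
  ext N
  classical
  set p : Polynomial ℂ := ∑ q ∈ Finset.HasAntidiagonal.antidiagonal N,
    Polynomial.C (MvPowerSeries.coeff (R := ℂ) q.2 (f ^ n)) * cpowPoly f q.1 with hp
  set q : Polynomial ℂ := (cpowPoly f N).comp (Polynomial.X + Polynomial.C (n : ℂ)) with hq
  have hpe : ∀ b : ℂ, p.eval b = MvPowerSeries.coeff (R := ℂ) N (cpow f b * f ^ n) := by
    intro b
    rw [MvPowerSeries.coeff_mul, hp, Polynomial.eval_finset_sum]
    exact Finset.sum_congr rfl fun x _ => by
      rw [Polynomial.eval_mul, Polynomial.eval_C, cpowPoly_eval, mul_comm]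
  have hqe : ∀ b : ℂ, q.eval b = MvPowerSeries.coeff (R := ℂ) N (cpow f (b + n)) := by
    intro b
    rw [hq, Polynomial.eval_comp, Polynomial.eval_add, Polynomial.eval_X, Polynomial.eval_C,
      cpowPoly_eval]
  have key : ∀ m : ℕ, p.eval (m : ℂ) = q.eval (m : ℂ) := by
    intro m
    rw [hpe, hqe, cpow_natCast hf m]
    rw [show ((m : ℂ) + n) = ((m + n : ℕ) : ℂ) by push_cast; ring, cpow_natCast hf (m + n),
      pow_add]
  have := polyext key a
  rw [hpe, hqe] at this
  exact this

lemma cpow_add {f : PS} (hf : MvPowerSeries.constantCoeff (σ := ℕ+) (R := ℂ) f = 1) (a b : ℂ) :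
    cpow f a * cpow f b = cpow f (a + b) := by
  ext N
  classical
  set p : Polynomial ℂ := ∑ q ∈ Finset.HasAntidiagonal.antidiagonal N,
    Polynomial.C (MvPowerSeries.coeff (R := ℂ) q.1 (cpow f a)) * cpowPoly f q.2 with hp
  set q : Polynomial ℂ := (cpowPoly f N).comp (Polynomial.C a + Polynomial.X) with hq
  have hpe : ∀ c : ℂ, p.eval c = MvPowerSeries.coeff (R := ℂ) N (cpow f a * cpow f c) := by
    intro c
    rw [MvPowerSeries.coeff_mul, hp, Polynomial.eval_finset_sum]
    exact Finset.sum_congr rfl fun x _ => by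
      rw [Polynomial.eval_mul, Polynomial.eval_C, cpowPoly_eval]
  have hqe : ∀ c : ℂ, q.eval c = MvPowerSeries.coeff (R := ℂ) N (cpow f (a + c)) := by
    intro c
    rw [hq, Polynomial.eval_comp, Polynomial.eval_add, Polynomial.eval_X, Polynomial.eval_C,
      cpowPoly_eval]
  have key : ∀ m : ℕ, p.eval (m : ℂ) = q.eval (m : ℂ) := by
    intro m
    rw [hpe, hqe, cpow_natCast hf m, cpow_mul_pow hf m a]
  have := polyext key b
  rw [hpe, hqe] at this
  exact this

lemma cpow_mul_base {f g : PS} (hf : MvPowerSeries.constantCoeff (σ := ℕ+) (R := ℂ) f = 1)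
    (hg : MvPowerSeries.constantCoeff (σ := ℕ+) (R := ℂ) g = 1) (a : ℂ) :
    cpow (f * g) a = cpow f a * cpow g a := by
  have hfg : MvPowerSeries.constantCoeff (σ := ℕ+) (R := ℂ) (f * g) = 1 := by rw [map_mul, hf, hg, one_mul]
  ext N
  classical
  set p : Polynomial ℂ := cpowPoly (f * g) N with hp
  set q : Polynomial ℂ := ∑ x ∈ Finset.HasAntidiagonal.antidiagonal N,
    cpowPoly f x.1 * cpowPoly g x.2 with hq
  have hpe : ∀ c : ℂ, p.eval c = MvPowerSeries.coeff (R := ℂ) N (cpow (f * g) c) :=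
    fun c => cpowPoly_eval _ _ _
  have hqe : ∀ c : ℂ, q.eval c = MvPowerSeries.coeff (R := ℂ) N (cpow f c * cpow g c) := by
    intro c
    rw [MvPowerSeries.coeff_mul, hq, Polynomial.eval_finset_sum]
    exact Finset.sum_congr rfl fun x _ => by
      rw [Polynomial.eval_mul, cpowPoly_eval, cpowPoly_eval]
  have key : ∀ m : ℕ, p.eval (m : ℂ) = q.eval (m : ℂ) := by
    intro m
    rw [hpe, hqe, cpow_natCast hf m, cpow_natCast hg m, cpow_natCast hfg m, mul_pow]
  have := polyext key a
  rw [hpe, hqe] at this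
  exact this

lemma cpow_pow {f : PS} (hf : MvPowerSeries.constantCoeff (σ := ℕ+) (R := ℂ) f = 1) (a : ℂ) (n : ℕ) :
    (cpow f a) ^ n = cpow f (n * a) := by
  induction n with
  | zero => simp [cpow_zero]
  | succ n ih =>
    rw [pow_succ, ih, cpow_add hf]
    norm_num
    ring_nf

lemma cpow_cpow {f : PS} (hf : MvPowerSeries.constantCoeff (σ := ℕ+) (R := ℂ) f = 1) (a b : ℂ) :
    cpow (cpow f a) b = cpow f (a * b) := by
  ext N
  classical
  set p : Polynomial ℂ := cpowPoly (cpow f a) N with hp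
  set q : Polynomial ℂ := (cpowPoly f N).comp (Polynomial.C a * Polynomial.X) with hq
  have hpe : ∀ c : ℂ, p.eval c = MvPowerSeries.coeff (R := ℂ) N (cpow (cpow f a) c) :=
    fun c => cpowPoly_eval _ _ _
  have hqe : ∀ c : ℂ, q.eval c = MvPowerSeries.coeff (R := ℂ) N (cpow f (a * c)) := by
    intro c
    rw [hq, Polynomial.eval_comp, Polynomial.eval_mul, Polynomial.eval_X, Polynomial.eval_C,
      cpowPoly_eval]
  have key : ∀ m : ℕ, p.eval (m : ℂ) = q.eval (m : ℂ) := by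
    intro m
    rw [hpe, hqe, cpow_natCast (cpow_constantCoeff f a) m, cpow_pow hf, mul_comm a (m : ℂ)]
  have := polyext key b
  rw [hpe, hqe] at this
  exact this

end S12
end Chunk2

namespace S12

-- locality lemmas
lemma coeff_mul_congr {u u' v v' : PS} {N : ℕ+ →₀ ℕ}
    (hu : ∀ M ≤ N, MvPowerSeries.coeff (R := ℂ) M u = MvPowerSeries.coeff (R := ℂ) M u')
    (hv : ∀ M ≤ N, MvPowerSeries.coeff (R := ℂ) M v = MvPowerSeries.coeff (R := ℂ) M v') :
    MvPowerSeries.coeff (R := ℂ) N (u * v) = MvPowerSeries.coeff (R := ℂ) N (u' * v') := by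
  classical
  rw [MvPowerSeries.coeff_mul, MvPowerSeries.coeff_mul]
  apply Finset.sum_congr rfl
  rintro ⟨A, B⟩ hAB
  rw [Finset.HasAntidiagonal.mem_antidiagonal] at hAB
  have hA : A ≤ N := hAB ▸ le_self_add
  have hB : B ≤ N := hAB ▸ le_add_self
  rw [hu A hA, hv B hB]

lemma coeff_pow_congr {u v : PS} {N : ℕ+ →₀ ℕ}
    (h : ∀ M ≤ N, MvPowerSeries.coeff (R := ℂ) M u = MvPowerSeries.coeff (R := ℂ) M v) (k : ℕ) :
    ∀ M ≤ N, MvPowerSeries.coeff (R := ℂ) M (u ^ k) = MvPowerSeries.coeff (R := ℂ) M (v ^ k) := by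
  induction k with
  | zero => intro M _; rfl
  | succ k ih =>
    intro M hM
    rw [pow_succ, pow_succ]
    exact coeff_mul_congr (fun M' hM' => ih M' (hM'.trans hM))
      (fun M' hM' => h M' (hM'.trans hM))

lemma coeff_cpow_congr {u v : PS} {N : ℕ+ →₀ ℕ}
    (h : ∀ M ≤ N, MvPowerSeries.coeff (R := ℂ) M u = MvPowerSeries.coeff (R := ℂ) M v) (a : ℂ) :
    MvPowerSeries.coeff (R := ℂ) N (cpow u a) = MvPowerSeries.coeff (R := ℂ) N (cpow v a) := by
  rw [coeff_cpow, coeff_cpow]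
  apply Finset.sum_congr rfl
  intro k _
  congr 1
  exact coeff_pow_congr (fun M hM => by rw [map_sub, map_sub, h M hM]) k N le_rfl

-- single-variable support of cpow (1 - X j) a
lemma constOneSubX (j : ℕ+) : MvPowerSeries.constantCoeff (σ := ℕ+) (R := ℂ) (1 - X j) = 1 := by
  rw [map_sub]
  simp

lemma coeff_cpowX_ne {j : ℕ+} {M : ℕ+ →₀ ℕ} (a : ℂ) (hM : M ≠ 0) (hMj : M j = 0) :
    MvPowerSeries.coeff (R := ℂ) M (cpow (1 - X j) a) = 0 := by
  classical
  rw [coeff_cpow]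
  apply Finset.sum_eq_zero
  intro k _
  have h1 : (1 - X j - 1 : PS) = (-1 : ℂ) • X j := by
    rw [neg_one_smul]
    ring
  rw [h1, smul_pow, MvPowerSeries.coeff_smul, MvPowerSeries.coeff_X_pow, if_neg, mul_zero,
    mul_zero]
  intro hsingle
  rcases Nat.eq_zero_or_pos k with hk | hk
  · subst hk
    simp only [Finsupp.single_zero] at hsingle
    exact hM hsingle
  · have : M j = k := by rw [hsingle]; simp
    omega

-- dropping a factor supported away from N
lemma coeff_mul_of_outside {A g : PS} {j : ℕ+}
    (hg : ∀ M : ℕ+ →₀ ℕ, M ≠ 0 → M j = 0 → MvPowerSeries.coeff (R := ℂ) M g = 0)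
    (hg1 : MvPowerSeries.constantCoeff (σ := ℕ+) (R := ℂ) g = 1) {N : ℕ+ →₀ ℕ} (hN : N j = 0) :
    MvPowerSeries.coeff (R := ℂ) N (A * g) = MvPowerSeries.coeff (R := ℂ) N A := by
  classical
  rw [MvPowerSeries.coeff_mul]
  rw [Finset.sum_eq_single_of_mem (N, 0) (by rw [Finset.HasAntidiagonal.mem_antidiagonal, add_zero])]
  · rw [MvPowerSeries.coeff_zero_eq_constantCoeff, hg1, mul_one]
  · rintro ⟨A', B⟩ hAB hne
    rw [Finset.HasAntidiagonal.mem_antidiagonal] at hAB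
    have hAB' : A' + B = N := hAB
    have hB : B ≠ 0 := by
      rintro rfl
      rw [add_zero] at hAB'
      exact hne (by rw [hAB'])
    have hBle : B ≤ N := hAB' ▸ le_add_self
    have hBj : B j = 0 := by
      have := hBle j
      omega
    rw [hg B hB hBj, mul_zero]

lemma coeff_mul_prod_outside {f : ℕ+ → PS}
    (hf : ∀ j, (∀ M : ℕ+ →₀ ℕ, M ≠ 0 → M j = 0 → MvPowerSeries.coeff (R := ℂ) M (f j) = 0) ∧
      MvPowerSeries.constantCoeff (σ := ℕ+) (R := ℂ) (f j) = 1)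
    {N : ℕ+ →₀ ℕ} :
    ∀ (u : Finset ℕ+), (∀ j ∈ u, N j = 0) → ∀ A : PS,
      MvPowerSeries.coeff (R := ℂ) N (A * ∏ j ∈ u, f j) = MvPowerSeries.coeff (R := ℂ) N A := by
  classical
  intro u
  induction u using Finset.induction with
  | empty => intro _ A; simp
  | @insert j u hj ih =>
    intro hu A
    rw [Finset.prod_insert hj, show A * (f j * ∏ k ∈ u, f k) = A * (∏ k ∈ u, f k) * f j by ring]
    rw [coeff_mul_of_outside (hf j).1 (hf j).2 (hu j (Finset.mem_insert_self j u))]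
    exact ih (fun k hk => hu k (Finset.mem_insert_of_mem hk)) A

lemma coeff_prod_stable {f : ℕ+ → PS}
    (hf : ∀ j, (∀ M : ℕ+ →₀ ℕ, M ≠ 0 → M j = 0 → MvPowerSeries.coeff (R := ℂ) M (f j) = 0) ∧
      MvPowerSeries.constantCoeff (σ := ℕ+) (R := ℂ) (f j) = 1)
    {N : ℕ+ →₀ ℕ} {t : Finset ℕ+} (ht : N.support ⊆ t) :
    MvPowerSeries.coeff (R := ℂ) N (∏ j ∈ t, f j) = MvPowerSeries.coeff (R := ℂ) N (∏ j ∈ N.support, f j) := by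
  classical
  rw [← Finset.prod_sdiff ht, mul_comm]
  apply coeff_mul_prod_outside hf
  intro j hj
  rw [Finset.mem_sdiff] at hj
  have := hj.2
  rw [Finsupp.mem_support_iff] at this
  omega

end S12

namespace S12

noncomputable def Qfam (n : ℕ) (j : ℕ+) : PS := cpow (1 - X j) (-(min n (j : ℕ) : ℕ) : ℂ)

noncomputable def QN (n : ℕ) : PS :=
  fun N => MvPowerSeries.coeff (R := ℂ) N (∏ j ∈ N.support, Qfam n j)

lemma Qfam_prop (n : ℕ) : ∀ j, (∀ M : ℕ+ →₀ ℕ, M ≠ 0 → M j = 0 →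
      MvPowerSeries.coeff (R := ℂ) M (Qfam n j) = 0) ∧ MvPowerSeries.constantCoeff (σ := ℕ+) (R := ℂ) (Qfam n j) = 1 :=
  fun j => ⟨fun M h1 h2 => coeff_cpowX_ne _ h1 h2, cpow_constantCoeff _ _⟩

lemma coeff_QN (n : ℕ) (N : ℕ+ →₀ ℕ) :
    MvPowerSeries.coeff (R := ℂ) N (QN n) = MvPowerSeries.coeff (R := ℂ) N (∏ j ∈ N.support, Qfam n j) :=
  rfl

lemma coeff_QN_prod (n : ℕ) {N : ℕ+ →₀ ℕ} {t : Finset ℕ+} (ht : N.support ⊆ t) :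
    MvPowerSeries.coeff (R := ℂ) N (QN n) = MvPowerSeries.coeff (R := ℂ) N (∏ j ∈ t, Qfam n j) := by
  rw [coeff_QN, coeff_prod_stable (Qfam_prop n) ht]

lemma support_mono {M N : ℕ+ →₀ ℕ} (h : M ≤ N) : M.support ⊆ N.support := by
  intro x hx
  rw [Finsupp.mem_support_iff] at *
  have := h x
  omega

lemma coeff_QN_agree (n : ℕ) {N : ℕ+ →₀ ℕ} {t : Finset ℕ+} (ht : N.support ⊆ t) :
    ∀ M ≤ N, MvPowerSeries.coeff (R := ℂ) M (QN n) = MvPowerSeries.coeff (R := ℂ) M (∏ j ∈ t, Qfam n j) := by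
  intro M hM
  rw [coeff_QN_prod n ((support_mono hM).trans ht)]

lemma QN_hasProd (n : ℕ) : HasProdPS (Qfam n) (QN n) := by
  intro N
  exact ⟨N.support, fun t ht => (coeff_QN_prod n ht).symm⟩

lemma QN_const (n : ℕ) : MvPowerSeries.constantCoeff (σ := ℕ+) (R := ℂ) (QN n) = 1 := by
  rw [← MvPowerSeries.coeff_zero_eq_constantCoeff, coeff_QN]
  simp

lemma cpow_one_base (a : ℂ) : cpow (1 : PS) a = 1 := by
  ext N
  rw [coeff_cpow, Finset.sum_eq_single 0]
  · simp [binomC_zero_right]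
  · intro k _ hk
    rw [sub_self, zero_pow hk]
    simp
  · intro h
    simp at h

lemma QN_zero : QN 0 = 1 := by
  ext N
  rw [coeff_QN]
  have : ∀ j ∈ N.support, Qfam 0 j = 1 := by
    intro j _
    rw [Qfam]
    norm_num
    exact cpow_zero _
  rw [Finset.prod_congr rfl this, Finset.prod_const_one]

lemma hasProdPS_unique {ι : Type*} {f : ι → PS} {P P' : PS}
    (h1 : HasProdPS f P) (h2 : HasProdPS f P') : P = P' := by
  classical
  ext N
  obtain ⟨s, hs⟩ := h1 N
  obtain ⟨s', hs'⟩ := h2 N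
  rw [← hs (s ∪ s') Finset.subset_union_left, hs' (s ∪ s') Finset.subset_union_right]

lemma hasProdPS_one {ι : Type*} : HasProdPS (fun _ : ι => (1 : PS)) 1 := by
  intro N
  exact ⟨∅, fun t _ => by rw [Finset.prod_const_one]⟩

lemma hasProdPS_of_finite {g : ℕ+ → PS} {T : Finset ℕ+} (hg : ∀ j ∉ T, g j = 1) {P : PS}
    (hP : ∏ j ∈ T, g j = P) : HasProdPS g P := by
  intro N
  refine ⟨T, fun t ht => ?_⟩
  rw [← Finset.prod_subset ht (fun x _ hx => hg x hx), hP]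

lemma cpow_prod {ι : Type*} (t : Finset ι) (g : ι → PS)
    (hg : ∀ k ∈ t, MvPowerSeries.constantCoeff (σ := ℕ+) (R := ℂ) (g k) = 1) (c : ℂ) :
    cpow (∏ k ∈ t, g k) c = ∏ k ∈ t, cpow (g k) c := by
  classical
  induction t using Finset.induction with
  | empty => simp [cpow_one_base]
  | @insert j u hj ih =>
    rw [Finset.prod_insert hj, Finset.prod_insert hj,
      cpow_mul_base (hg j (Finset.mem_insert_self j u)) (by
        rw [map_prod]
        exact Finset.prod_eq_one fun k hk => hg k (Finset.mem_insert_of_mem hk)),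
      ih (fun k hk => hg k (Finset.mem_insert_of_mem hk))]

lemma hasProdPS_cpow {g : ℕ+ → PS} {P : PS} (h : HasProdPS g P)
    (hg : ∀ k, MvPowerSeries.constantCoeff (σ := ℕ+) (R := ℂ) (g k) = 1) (c : ℂ) :
    HasProdPS (fun k => cpow (g k) c) (cpow P c) := by
  classical
  intro N
  choose sfun hsfun using h
  refine ⟨(Finset.Iic N).biUnion sfun, fun t ht => ?_⟩
  have hagree : ∀ M ≤ N, MvPowerSeries.coeff (R := ℂ) M (∏ j ∈ t, g j) = MvPowerSeries.coeff (R := ℂ) M P := by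
    intro M hM
    apply hsfun M t
    exact (Finset.subset_biUnion_of_mem sfun (Finset.mem_Iic.mpr hM)).trans ht
  rw [← cpow_prod t g (fun k _ => hg k) c]
  exact coeff_cpow_congr hagree c

-- The key algebraic relation
lemma keyRel (n : ℕ) (i : ℕ+) (hi : (i : ℕ) = n + 1) :
    QN n * QN (n + 2) = (1 - X i) * (QN (n + 1)) ^ 2 := by
  classical
  ext N
  set s : Finset ℕ+ := insert i N.support with hs
  have hsub : N.support ⊆ s := Finset.subset_insert _ _
  have his : i ∈ s := Finset.mem_insert_self _ _
  rw [coeff_mul_congr (coeff_QN_agree n hsub) (coeff_QN_agree (n+2) hsub)]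
  rw [coeff_mul_congr (u' := 1 - X i) (fun M _ => rfl)
    (coeff_pow_congr (coeff_QN_agree (n+1) hsub) 2)]
  congr 1
  -- now a finite product identity
  have lhs : (∏ j ∈ s, Qfam n j) * ∏ j ∈ s, Qfam (n+2) j
      = ∏ j ∈ s, cpow (1 - X j) ((-(min n (j:ℕ) : ℕ) : ℂ) + (-(min (n+2) (j:ℕ) : ℕ) : ℂ)) := by
    rw [← Finset.prod_mul_distrib]
    exact Finset.prod_congr rfl fun j _ => cpow_add (constOneSubX j) _ _
  have rhs : (∏ j ∈ s, Qfam (n+1) j) ^ 2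
      = ∏ j ∈ s, cpow (1 - X j) ((-(min (n+1) (j:ℕ) : ℕ) : ℂ) + (-(min (n+1) (j:ℕ) : ℕ) : ℂ)) := by
    rw [sq, ← Finset.prod_mul_distrib]
    exact Finset.prod_congr rfl fun j _ => cpow_add (constOneSubX j) _ _
  have herase : ∀ j ∈ s.erase i,
      cpow (1 - X j) ((-(min n (j:ℕ) : ℕ) : ℂ) + (-(min (n+2) (j:ℕ) : ℕ) : ℂ))
      = cpow (1 - X j) ((-(min (n+1) (j:ℕ) : ℕ) : ℂ) + (-(min (n+1) (j:ℕ) : ℕ) : ℂ)) := by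
    intro j hj
    have hji : j ≠ i := Finset.ne_of_mem_erase hj
    have hjn : (j : ℕ) ≠ n + 1 := by
      rw [← hi]
      intro hc
      exact hji (PNat.coe_injective hc)
    have hnat : min n (j:ℕ) + min (n+2) (j:ℕ) = min (n+1) (j:ℕ) + min (n+1) (j:ℕ) := by omega
    have hnc : ((min n (j:ℕ) + min (n+2) (j:ℕ) : ℕ) : ℂ)
        = ((min (n+1) (j:ℕ) + min (n+1) (j:ℕ) : ℕ) : ℂ) := by exact_mod_cast hnat
    push_cast at hnc
    exact congrArg (cpow (1 - X j)) (by linear_combination -hnc)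
  rw [lhs, rhs, ← Finset.mul_prod_erase s _ his, ← Finset.mul_prod_erase s _ his,
    Finset.prod_congr rfl herase]
  have hfac : cpow (1 - X i) ((-(min n (i:ℕ) : ℕ) : ℂ) + (-(min (n+2) (i:ℕ) : ℕ) : ℂ))
      = (1 - X i) * cpow (1 - X i) ((-(min (n+1) (i:ℕ) : ℕ) : ℂ) + (-(min (n+1) (i:ℕ) : ℕ) : ℂ)) := by
    have h1 : (1 - X i) * cpow (1 - X i) ((-(min (n+1) (i:ℕ) : ℕ) : ℂ) + (-(min (n+1) (i:ℕ) : ℕ) : ℂ))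
        = cpow (1 - X i) (1 + ((-(min (n+1) (i:ℕ) : ℕ) : ℂ) + (-(min (n+1) (i:ℕ) : ℕ) : ℂ))) := by
      nth_rewrite 1 [show (1 - X i : PS) = cpow (1 - X i) 1 from (cpow_one (constOneSubX i)).symm]
      rw [cpow_add (constOneSubX i)]
    rw [h1]
    apply congrArg (cpow (1 - X i))
    rw [hi]
    have h2 : min n (n+1) = n := by omega
    have h3 : min (n+2) (n+1) = n+1 := by omega
    have h4 : min (n+1) (n+1) = n+1 := by omega
    rw [h2, h3, h4]
    push_cast
    ring
  rw [hfac]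
  ring

end S12

namespace S12

noncomputable def Qd (i : ℕ+) : PS := QN (i : ℕ)

lemma Qd_const (i : ℕ+) : MvPowerSeries.constantCoeff (σ := ℕ+) (R := ℂ) (Qd i) = 1 := QN_const _

lemma inv2 {f : PS} (hf : MvPowerSeries.constantCoeff (σ := ℕ+) (R := ℂ) f = 1) : cpow f (-2) * f ^ 2 = 1 := by
  have h2 := cpow_natCast hf 2
  rw [← h2, cpow_add hf]
  norm_num
  exact cpow_zero f

lemma pnat_coe_mk (m : ℕ) (h : 0 < m) : ((⟨m, h⟩ : ℕ+) : ℕ) = m := rfl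

lemma pnat_ne_of_coe {a b : ℕ+} (h : (a : ℕ) ≠ (b : ℕ)) : a ≠ b := fun e => h (congrArg _ e)

lemma coe_two : ((2 : ℕ+) : ℕ) = 2 := rfl

lemma min_coe (i j : ℕ+) : ((min i j : ℕ+) : ℕ) = min (i : ℕ) (j : ℕ) := by
  rcases le_total i j with h | h
  · rw [min_eq_left h, min_eq_left ((PNat.coe_le_coe i j).mpr h)]
  · rw [min_eq_right h, min_eq_right ((PNat.coe_le_coe j i).mpr h)]

lemma DtriInv_eq (i j : ℕ+) : DtriInv i j = (-(min (i:ℕ) (j:ℕ) : ℕ) : ℂ) := by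
  rw [DtriInv, min_coe]

lemma prodT (j : ℕ+) : ∃ T : Finset ℕ+, (∀ k, k ∉ T → Dtri j k = 0) ∧
    ∏ k ∈ T, cpow (Qd k) (Dtri j k) = 1 - X j := by
  classical
  by_cases hj : j = 1
  · subst hj
    refine ⟨{1, 2}, ?_, ?_⟩
    · intro k hk
      simp only [Finset.mem_insert, Finset.mem_singleton, not_or] at hk
      rw [Dtri]
      rw [if_neg (fun h => hk.1 h.symm), if_neg]
      rintro (h | h)
      · have h' : ((1 : ℕ+) : ℕ) = ((k + 1 : ℕ+) : ℕ) := congrArg _ h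
        rw [PNat.one_coe, PNat.add_coe, PNat.one_coe] at h'
        have hk1 : 1 ≤ (k : ℕ) := k.2
        omega
      · exact hk.2 h
    · have h12 : (1 : ℕ+) ∉ ({2} : Finset ℕ+) := by decide
      rw [Finset.prod_insert h12, Finset.prod_singleton]
      have hd1 : Dtri 1 1 = -2 := by rw [Dtri, if_pos rfl]
      have hd2 : Dtri 1 2 = 1 := by
        rw [Dtri, if_neg (by decide), if_pos (Or.inr (by decide))]
      rw [hd1, hd2]
      have hQ2 : Qd 2 = QN 2 := rfl
      have hQ1 : Qd 1 = QN 1 := rfl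
      have hkey := keyRel 0 1 (by simp)
      rw [QN_zero, one_mul] at hkey
      rw [hQ1, hQ2, cpow_one (QN_const 2), hkey]
      have hI := inv2 (QN_const 1)
      calc cpow (QN 1) (-2) * ((1 - X 1) * QN 1 ^ 2)
          = cpow (QN 1) (-2) * QN 1 ^ 2 * (1 - X 1) := by ring
        _ = 1 - X 1 := by rw [hI, one_mul]
  · have hj2 : 2 ≤ (j : ℕ) := by
      have h1 : 1 ≤ (j : ℕ) := j.2
      rcases Nat.lt_or_ge (j:ℕ) 2 with h | h
      · exfalso
        apply hj
        apply PNat.coe_inj.mp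
        rw [PNat.one_coe]
        omega
      · exact h
    obtain ⟨p, hjp⟩ : ∃ p : ℕ+, j = p + 1 := by
      refine ⟨(⟨(j : ℕ) - 1, by omega⟩ : ℕ+), ?_⟩
      apply PNat.coe_inj.mp
      show (j : ℕ) = (j : ℕ) - 1 + 1
      omega
    subst hjp
    have hc1 : ((p + 1 : ℕ+) : ℕ) = (p : ℕ) + 1 := by rw [PNat.add_coe, PNat.one_coe]
    have hc2 : ((p + 2 : ℕ+) : ℕ) = (p : ℕ) + 2 := by rw [PNat.add_coe, coe_two]
    have hne1 : p ≠ p + 1 := pnat_ne_of_coe (by rw [hc1]; omega)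
    have hne2 : p ≠ p + 2 := pnat_ne_of_coe (by rw [hc2]; omega)
    have hne3 : p + 1 ≠ p + 2 := pnat_ne_of_coe (by rw [hc1, hc2]; omega)
    refine ⟨{p, p + 1, p + 2}, ?_, ?_⟩
    · intro k hk
      simp only [Finset.mem_insert, Finset.mem_singleton, not_or] at hk
      rw [Dtri]
      rw [if_neg (fun h => hk.2.1 h.symm), if_neg]
      rintro (h | h)
      · apply hk.1
        apply PNat.coe_inj.mp
        have h' := congrArg (fun x : ℕ+ => (x : ℕ)) h
        simp only [PNat.add_coe, PNat.one_coe] at h'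
        omega
      · exact hk.2.2 h
    · have hm1 : p ∉ ({p + 1, p + 2} : Finset ℕ+) := by
        simp only [Finset.mem_insert, Finset.mem_singleton]
        push_neg
        exact ⟨hne1, hne2⟩
      have hm2 : p + 1 ∉ ({p + 2} : Finset ℕ+) := by
        simp only [Finset.mem_singleton]
        exact hne3
      rw [Finset.prod_insert hm1, Finset.prod_insert hm2, Finset.prod_singleton]
      have hd1 : Dtri (p + 1) p = 1 := by
        rw [Dtri, if_neg (fun h => hne1 h.symm), if_pos (Or.inl rfl)]
      have hd2 : Dtri (p + 1) (p + 1) = -2 := by rw [Dtri, if_pos rfl]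
      have hd3 : Dtri (p + 1) (p + 2) = 1 := by
        rw [Dtri, if_neg hne3, if_pos]
        right
        apply PNat.coe_inj.mp
        rw [hc2, PNat.add_coe, PNat.one_coe, hc1]
      rw [hd1, hd2, hd3]
      have hQp : Qd p = QN (p : ℕ) := rfl
      have hQp1 : Qd (p + 1) = QN ((p : ℕ) + 1) := by rw [Qd, hc1]
      have hQp2 : Qd (p + 2) = QN ((p : ℕ) + 2) := by rw [Qd, hc2]
      have hkey := keyRel (p : ℕ) (p + 1) hc1
      rw [hQp, hQp1, hQp2, cpow_one (QN_const _), cpow_one (QN_const _)]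
      have hI := inv2 (QN_const ((p : ℕ) + 1))
      calc QN (p : ℕ) * (cpow (QN ((p:ℕ) + 1)) (-2) * QN ((p:ℕ) + 2))
          = cpow (QN ((p:ℕ) + 1)) (-2) * (QN (p:ℕ) * QN ((p:ℕ) + 2)) := by ring
        _ = cpow (QN ((p:ℕ) + 1)) (-2) * ((1 - X (p + 1)) * QN ((p:ℕ) + 1) ^ 2) := by rw [hkey]
        _ = cpow (QN ((p:ℕ) + 1)) (-2) * QN ((p:ℕ) + 1) ^ 2 * (1 - X (p + 1)) := by ring
        _ = 1 - X (p + 1) := by rw [hI, one_mul]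

lemma hasProd_D (j : ℕ+) : HasProdPS (fun k => cpow (Qd k) (Dtri j k)) (1 - X j) := by
  obtain ⟨T, h0, hP⟩ := prodT j
  exact hasProdPS_of_finite (fun k hk => by rw [h0 k hk, cpow_zero]) hP

lemma hasProd_Dinv (i j : ℕ+) :
    HasProdPS (fun k => cpow (Qd k) (DtriInv i j * Dtri j k)) (cpow (1 - X j) (DtriInv i j)) := by
  obtain ⟨T, h0, hP⟩ := prodT j
  apply hasProdPS_of_finite (T := T) (fun k hk => by rw [h0 k hk, mul_zero, cpow_zero])
  have step : ∀ k ∈ T, cpow (Qd k) (DtriInv i j * Dtri j k)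
      = cpow (cpow (Qd k) (Dtri j k)) (DtriInv i j) := by
    intro k _
    rw [cpow_cpow (Qd_const k), mul_comm]
  rw [Finset.prod_congr rfl step, ← cpow_prod T _ (fun k _ => cpow_constantCoeff _ _), hP]

lemma famEq (i : ℕ+) :
    (fun j : ℕ+ => cpow (1 - X j) (-(((min i j : ℕ+) : ℕ) : ℂ))) = Qfam (i : ℕ) := by
  funext j
  rw [Qfam, min_coe]

lemma hasProd_inner (i : ℕ+) : HasProdPS (fun j => cpow (1 - X j) (DtriInv i j)) (Qd i) := by
  have h := QN_hasProd (i : ℕ)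
  have heq : (fun j : ℕ+ => cpow (1 - X j) (DtriInv i j)) = Qfam (i : ℕ) := by
    funext j
    rw [DtriInv_eq, Qfam]
  rw [heq]
  exact h

end S12

open S12 in
theorem statement12_aux :
    (∃ Q : ℕ+ → MvPowerSeries ℕ+ ℂ,
      ∀ i, HasProdPS
        (fun j : ℕ+ => cpow (1 - MvPowerSeries.X j) (-(((min i j : ℕ+) : ℕ) : ℂ))) (Q i)) ∧
    (∀ Q : ℕ+ → MvPowerSeries ℕ+ ℂ,
      (∀ i, HasProdPS
        (fun j : ℕ+ => cpow (1 - MvPowerSeries.X j) (-(((min i j : ℕ+) : ℕ) : ℂ))) (Q i)) →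
      ((InfSys Dtri (fun _ _ => 0) Q ∧ IsCanonicalPS DtriInv Dtri Q) ∧
       ∀ Q₂ : ℕ+ → MvPowerSeries ℕ+ ℂ,
         InfSys Dtri (fun _ _ => 0) Q₂ → IsCanonicalPS DtriInv Dtri Q₂ → Q₂ = Q)) := by
  have hQd : ∀ i : ℕ+, HasProdPS
      (fun j : ℕ+ => cpow (1 - MvPowerSeries.X j) (-(((min i j : ℕ+) : ℕ) : ℂ))) (Qd i) := by
    intro i
    rw [famEq i]
    exact QN_hasProd (i : ℕ)
  constructor
  · exact ⟨Qd, hQd⟩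
  · intro Q hQ
    have hQeq : Q = Qd := funext fun i => hasProdPS_unique (hQ i) (hQd i)
    subst hQeq
    have hones : ∀ (Q' : ℕ+ → S12.PS) (j : ℕ+),
        HasProdPS (fun k => cpow (Q' k) ((fun (_ _ : ℕ+) => (0 : ℂ)) j k)) 1 := by
      intro Q' j
      rw [show (fun k => cpow (Q' k) ((fun (_ _ : ℕ+) => (0 : ℂ)) j k)) = fun _ : ℕ+ => (1 : S12.PS)
        from funext fun k => cpow_zero _]
      exact hasProdPS_one
    refine ⟨⟨⟨fun i => Qd_const i, fun i => ⟨1 - MvPowerSeries.X i, 1, hasProd_D i, hones Qd i,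
        by ring⟩⟩, fun i => ⟨fun j => cpow (1 - MvPowerSeries.X j) (DtriInv i j),
        fun j => hasProd_Dinv i j, hasProd_inner i⟩⟩, ?_⟩
    intro Q₂ hsys hcan
    have hc1 := hsys.1
    have hD2 : ∀ j : ℕ+, HasProdPS (fun k => cpow (Q₂ k) (Dtri j k)) (1 - MvPowerSeries.X j) := by
      intro j
      obtain ⟨P₁, P₂, h1, h2, heq⟩ := hsys.2 j
      have hP2 : P₂ = 1 := hasProdPS_unique h2 (hones Q₂ j)
      rw [hP2, mul_one] at heq
      have hP1 : P₁ = 1 - MvPowerSeries.X j := by linear_combination heq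
      rw [← hP1]
      exact h1
    funext i
    obtain ⟨inner, hinner, hQ2i⟩ := hcan i
    have hinner' : inner = fun j => cpow (1 - MvPowerSeries.X j) (DtriInv i j) := by
      funext j
      have ht := hasProdPS_cpow (hD2 j) (fun k => cpow_constantCoeff _ _) (DtriInv i j)
      rw [show (fun k => cpow (cpow (Q₂ k) (Dtri j k)) (DtriInv i j))
          = fun k => cpow (Q₂ k) (DtriInv i j * Dtri j k)
        from funext fun k => by rw [cpow_cpow (hc1 k), mul_comm]] at ht
      exact hasProdPS_unique (hinner j) ht
    rw [hinner'] at hQ2i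
    exact hasProdPS_unique hQ2i (hasProd_inner i)

/-- On `H = {1,2,3,…}` with `D_{ij} = -2δ_{ij}+δ_{i,j-1}+δ_{i,j+1}`,
`(D⁻¹)_{ij} = -min(i,j)` and `G = O`, the infinite products
`∏_{j=1}^∞ (1-w_j)^{-min(i,j)}` converge, and the family they define is the unique
canonical solution of the infinite `Q`-system `∏_j Q_j^{D_{ij}} + w_i = 1`, i.e.
`Q_{i-1} Q_{i+1} / Q_i² + w_i = 1` with `Q_0 = 1`. -/
theorem statement12 :
    (∃ Q : ℕ+ → MvPowerSeries ℕ+ ℂ,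
      ∀ i, HasProdPS
        (fun j : ℕ+ => cpow (1 - MvPowerSeries.X j) (-(((min i j : ℕ+) : ℕ) : ℂ))) (Q i)) ∧
    (∀ Q : ℕ+ → MvPowerSeries ℕ+ ℂ,
      (∀ i, HasProdPS
        (fun j : ℕ+ => cpow (1 - MvPowerSeries.X j) (-(((min i j : ℕ+) : ℕ) : ℂ))) (Q i)) →
      ((InfSys Dtri (fun _ _ => 0) Q ∧ IsCanonicalPS DtriInv Dtri Q) ∧
       ∀ Q₂ : ℕ+ → MvPowerSeries ℕ+ ℂ,
         InfSys Dtri (fun _ _ => 0) Q₂ → IsCanonicalPS DtriInv Dtri Q₂ → Q₂ = Q)) :=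
  statement12_aux
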